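/- Let n ≥ 2 and let β be an nc truncated tracial sequence of degree 2n whose moment matrix M_n is in canonical form, i.e., satisfies the column relation XY + YX = 0 and one of the column relations R being Y² = 1 − X², Y² = 1, Y² = 1 + X², Y² = X². If β admits an nc measure, then: (1) β_{X^{2i+1}} = β_X for every i ∈ ℕ with 2i+1 ≤ 2n; (2) β_{X^{j}Y} = 0 for every j ∈ ℕ, j ≥ 1, with j+1 ≤ 2n; (3) β_{X^{k}Y²} = 0 for every odd k with k+2 ≤ 2n; and (4) depending on the second relation: if R is Y² = 1 − X², then β_{X^kY²} = β_{X^k} − β_{X^{k+2}} for every k with k+2 ≤ 2n; if R is Y² = 1 or Y² = 1 + X², then β_X = 0; if R is Y² = 1, then β_{X^kY²} = β_{X^k} for every k with k+2 ≤ 2n; if R is Y² = 1 + X², then β_{X^kY²} = β_{X^k} + β_{X^{k+2}} for every k with k+2 ≤ 2n; if R is Y² = X², then β_{X^kY²} = β_{X^{k+2}} for every k with k+2 ≤ 2n. -/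

import Mathlib

open Matrix BigOperators

/-- Words in the free monoid on two letters `X = 0`, `Y = 1`. -/
abbrev Word : Type := List (Fin 2)

/-- Evaluation of a word at a pair of square matrices (`X ↦ A`, `Y ↦ B`). -/
def wEval {m : Type*} [Fintype m] [DecidableEq m] (A B : Matrix m m ℝ) : Word → Matrix m m ℝ
  | [] => 1
  | i :: w => (if i = (0 : Fin 2) then A else B) * wEval A B w

/-- Normalized trace. -/
noncomputable def nTr {m : Type*} [Fintype m] (A : Matrix m m ℝ) : ℝ :=
  A.trace / (Fintype.card m : ℝ)
section helpers

variable {d : ℕ}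

lemma trace_tmul_eq_sum (C : Matrix (Fin d) (Fin d) ℝ) :
    (Cᵀ * C).trace = ∑ i, ∑ j, (C j i)^2 := by
  simp [Matrix.trace, Matrix.mul_apply, Matrix.diag, sq]

lemma trace_tmul_nonneg (C : Matrix (Fin d) (Fin d) ℝ) : 0 ≤ (Cᵀ * C).trace := by
  rw [trace_tmul_eq_sum]; positivity

lemma eq_zero_of_trace_tmul (C : Matrix (Fin d) (Fin d) ℝ) (h : (Cᵀ * C).trace = 0) :
    C = 0 := by
  rw [trace_tmul_eq_sum] at h
  ext i j
  have h1 : ∀ i ∈ (Finset.univ : Finset (Fin d)), (0:ℝ) ≤ ∑ j, (C j i)^2 := by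
    intros; positivity
  have h2 := (Finset.sum_eq_zero_iff_of_nonneg h1).1 h j (Finset.mem_univ j)
  have h4 : ∀ a ∈ (Finset.univ : Finset (Fin d)), (0:ℝ) ≤ (C a j)^2 := by
    intros; positivity
  have := (Finset.sum_eq_zero_iff_of_nonneg h4).1 h2 i (Finset.mem_univ i)
  have := sq_eq_zero_iff.1 this
  simpa [Matrix.zero_apply] using this

lemma wEval_append {m : Type*} [Fintype m] [DecidableEq m] (A B : Matrix m m ℝ) (u v : Word) :
    wEval A B (u ++ v) = wEval A B u * wEval A B v := by
  induction u with
  | nil => simp [wEval]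
  | cons a u ih => simp [wEval, ih, Matrix.mul_assoc]

lemma wEval_rep {m : Type*} [Fintype m] [DecidableEq m] (A B : Matrix m m ℝ) (k : ℕ) :
    wEval A B (List.replicate k 0) = A ^ k := by
  induction k with
  | zero => simp [wEval]
  | succ k ih =>
    rw [List.replicate_succ, show wEval A B ((0 : Fin 2) :: List.replicate k 0)
      = A * wEval A B (List.replicate k 0) from by simp [wEval], ih, ← pow_succ']

end helpers

section atom

variable {d : ℕ} {A B S T : Matrix (Fin d) (Fin d) ℝ}

lemma anti_pow (hS : S * A = -(A * S)) :
    ∀ k : ℕ, S * A ^ k = ((-1 : ℝ) ^ k) • (A ^ k * S)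
  | 0 => by simp
  | (k+1) => by
    rw [pow_succ, ← Matrix.mul_assoc, anti_pow hS k, Matrix.smul_mul,
      Matrix.mul_assoc, hS, pow_succ]
    simp [Matrix.mul_assoc, pow_succ, mul_comm]

lemma trace_powA_mul_B (hAB : A * B + B * A = 0) (j : ℕ) (hj : j ≠ 0) :
    ((A ^ j) * B).trace = 0 := by
  obtain ⟨m, rfl⟩ := Nat.exists_eq_succ_of_ne_zero hj
  have hBA : A * B = -(B * A) := eq_neg_of_add_eq_zero_left hAB
  have key : (A ^ (m+1) * B).trace = -((A ^ (m+1) * B).trace) := by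
    calc (A ^ (m+1) * B).trace = (A ^ m * (A * B)).trace := by
          rw [pow_succ, Matrix.mul_assoc]
      _ = -((A ^ m * B) * A).trace := by
          rw [hBA]; simp [Matrix.mul_assoc]
      _ = -((A * (A ^ m * B)).trace) := by rw [Matrix.trace_mul_comm]
      _ = -((A ^ (m+1) * B).trace) := by
          rw [← Matrix.mul_assoc, ← pow_succ']
  linarith

end atom

section atom2

variable {d : ℕ} {A B S T : Matrix (Fin d) (Fin d) ℝ}

lemma trace_powA_mul_B2 (hAB : A * B + B * A = 0) {k : ℕ} (hk : Odd k) :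
    ((A ^ k) * (B * B)).trace = 0 := by
  have hBA : B * A = -(A * B) := eq_neg_of_add_eq_zero_right hAB
  have h := anti_pow hBA k
  rw [hk.neg_one_pow, neg_one_smul] at h
  have key : ((A ^ k) * (B * B)).trace = -(((A ^ k) * (B * B)).trace) := by
    calc ((A ^ k) * (B * B)).trace = ((A ^ k * B) * B).trace := by rw [Matrix.mul_assoc]
      _ = (B * (A ^ k * B)).trace := by rw [Matrix.trace_mul_comm]
      _ = ((B * A ^ k) * B).trace := by rw [Matrix.mul_assoc]
      _ = (-((A ^ k * B) * B)).trace := by rw [h, Matrix.neg_mul]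
      _ = -(((A ^ k) * (B * B)).trace) := by rw [Matrix.trace_neg, Matrix.mul_assoc]
  linarith

lemma trace_pow_odd_of_conj (hS : S * A = -(A * S)) (hST : S * T = 1) (hTS : T * S = 1)
    {k : ℕ} (hk : Odd k) : (A ^ k).trace = 0 := by
  have h := anti_pow hS k
  rw [hk.neg_one_pow, neg_one_smul] at h
  have h2 : A ^ k * S = -(S * A ^ k) := by rw [h, neg_neg]
  have key : (A ^ k).trace = -((A ^ k).trace) := by
    calc (A ^ k).trace = (A ^ k * (S * T)).trace := by rw [hST, Matrix.mul_one]
      _ = ((A ^ k * S) * T).trace := by rw [Matrix.mul_assoc]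
      _ = -((S * (A ^ k * T)).trace) := by
          rw [h2, Matrix.neg_mul, Matrix.trace_neg, Matrix.mul_assoc]
      _ = -(((A ^ k * T) * S).trace) := by rw [Matrix.trace_mul_comm]
      _ = -((A ^ k).trace) := by rw [Matrix.mul_assoc, hTS, Matrix.mul_one]
  linarith

lemma trace_relation (c₀ c₁ : ℝ)
    (hR : B * B = c₀ • (1 : Matrix (Fin d) (Fin d) ℝ) + c₁ • (A * A)) (k : ℕ) :
    ((A ^ k) * (B * B)).trace = c₀ * (A ^ k).trace + c₁ * (A ^ (k + 2)).trace := by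
  have hpow : A ^ k * (A * A) = A ^ (k + 2) := by
    rw [pow_add, sq]
  rw [hR, Matrix.mul_add, Matrix.mul_smul, Matrix.mul_smul, Matrix.mul_one,
    Matrix.trace_add, Matrix.trace_smul, Matrix.trace_smul, hpow, smul_eq_mul, smul_eq_mul]

lemma relA_trace (hAB : A * B + B * A = 0)
    (hR : B * B = (1 : Matrix (Fin d) (Fin d) ℝ) - A * A) (i : ℕ) :
    (A ^ (2 * i + 1)).trace = A.trace := by
  induction i with
  | zero => simp
  | succ i ih =>
    have h0 : ((A ^ (2 * i + 1)) * (B * B)).trace = 0 :=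
      trace_powA_mul_B2 hAB (by exact ⟨i, by ring⟩)
    rw [hR, Matrix.mul_sub, Matrix.mul_one, Matrix.trace_sub] at h0
    have hpow : A ^ (2 * i + 1) * (A * A) = A ^ (2 * (i + 1) + 1) := by
      rw [show 2 * (i + 1) + 1 = (2 * i + 1) + 2 from by ring]
      conv_rhs => rw [pow_add]
      rw [sq]
    rw [hpow] at h0
    linarith

lemma comm_nonsing_inv {M X : Matrix (Fin d) (Fin d) ℝ} (hdet : IsUnit M.det)
    (h : X * M = M * X) : X * M⁻¹ = M⁻¹ * X := by
  calc X * M⁻¹ = (M⁻¹ * M) * (X * M⁻¹) := by rw [Matrix.nonsing_inv_mul _ hdet, Matrix.one_mul]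
    _ = M⁻¹ * ((M * X) * M⁻¹) := by simp only [Matrix.mul_assoc]
    _ = M⁻¹ * ((X * M) * M⁻¹) := by rw [h]
    _ = M⁻¹ * (X * (M * M⁻¹)) := by simp only [Matrix.mul_assoc]
    _ = M⁻¹ * X := by rw [Matrix.mul_nonsing_inv _ hdet, Matrix.mul_one]

lemma dot_self_nonneg (v : Fin d → ℝ) : 0 ≤ v ⬝ᵥ v :=
  Finset.sum_nonneg fun i _ => mul_self_nonneg (v i)

lemma isUnit_det_sq_add_smul_one (hA : Aᵀ = A) {ε : ℝ} (hε : 0 < ε) :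
    IsUnit (A * A + ε • (1 : Matrix (Fin d) (Fin d) ℝ)).det := by
  rw [isUnit_iff_ne_zero]
  intro h0
  obtain ⟨v, hv0, hv⟩ := (Matrix.exists_mulVec_eq_zero_iff).mpr h0
  have h1 : v ⬝ᵥ ((A * A + ε • (1 : Matrix (Fin d) (Fin d) ℝ)) *ᵥ v) = 0 := by
    rw [hv, dotProduct_zero]
  rw [Matrix.add_mulVec, dotProduct_add, ← Matrix.mulVec_mulVec,
    Matrix.dotProduct_mulVec, Matrix.smul_mulVec, Matrix.one_mulVec] at h1
  have hvA : v ᵥ* A = A *ᵥ v := by rw [← Matrix.mulVec_transpose, hA]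
  rw [hvA, dotProduct_smul, smul_eq_mul] at h1
  have h2 : 0 ≤ (A *ᵥ v) ⬝ᵥ (A *ᵥ v) := dot_self_nonneg _
  have h3 : v ⬝ᵥ v ≠ 0 := fun h => hv0 (dotProduct_self_eq_zero.mp h)
  have h4 : 0 ≤ v ⬝ᵥ v := dot_self_nonneg v
  have h5 : 0 < v ⬝ᵥ v := lt_of_le_of_ne h4 (Ne.symm h3)
  nlinarith [mul_pos hε h5]

end atom2

section atom3

variable {d : ℕ} {A B : Matrix (Fin d) (Fin d) ℝ}

lemma isUnit_det_relC (hA : Aᵀ = A) (hR : B * B = 1 + A * A) : IsUnit B.det := by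
  rw [isUnit_iff_ne_zero]
  intro h0
  obtain ⟨v, hv0, hv⟩ := (Matrix.exists_mulVec_eq_zero_iff).mpr h0
  have h1 : (B * B) *ᵥ v = 0 := by
    rw [← Matrix.mulVec_mulVec, hv, Matrix.mulVec_zero]
  rw [hR, Matrix.add_mulVec, Matrix.one_mulVec, ← Matrix.mulVec_mulVec] at h1
  have h2 : v ⬝ᵥ (v + A *ᵥ (A *ᵥ v)) = 0 := by rw [h1, dotProduct_zero]
  rw [dotProduct_add, Matrix.dotProduct_mulVec] at h2
  have hvA : v ᵥ* A = A *ᵥ v := by rw [← Matrix.mulVec_transpose, hA]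
  rw [hvA] at h2
  have h3 : 0 ≤ (A *ᵥ v) ⬝ᵥ (A *ᵥ v) := dot_self_nonneg _
  have h4 : v ⬝ᵥ v ≠ 0 := fun h => hv0 (dotProduct_self_eq_zero.mp h)
  have h5 : 0 ≤ v ⬝ᵥ v := dot_self_nonneg v
  have h6 : 0 < v ⬝ᵥ v := lt_of_le_of_ne h5 (Ne.symm h4)
  nlinarith

lemma relD_traceA (hA : Aᵀ = A) (hAB : A * B + B * A = 0) (hR : B * B = A * A) :
    A.trace = 0 := by
  rcases Nat.eq_zero_or_pos d with hd | hd
  · subst hd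
    simp [Matrix.trace]
  have hdR : (0:ℝ) < (d : ℝ) := by exact_mod_cast hd
  have key : ∀ ε : ℝ, 0 < ε → A.trace ^ 2 ≤ ε * ((d:ℝ) ^ 2 / 4) := by
    intro ε hε
    set M := A * A + ε • (1 : Matrix (Fin d) (Fin d) ℝ) with hM
    have hdet := isUnit_det_sq_add_smul_one hA hε
    have hMT : M * M⁻¹ = 1 := Matrix.mul_nonsing_inv _ hdet
    have hTM : M⁻¹ * M = 1 := Matrix.nonsing_inv_mul _ hdet
    have hAM : A * M = M * A := by
      rw [hM, Matrix.mul_add, Matrix.add_mul, Matrix.mul_smul, Matrix.smul_mul,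
        Matrix.mul_one, Matrix.one_mul, ← Matrix.mul_assoc]
    have hBM : B * M = M * B := by
      rw [hM, Matrix.mul_add, Matrix.add_mul, Matrix.mul_smul, Matrix.smul_mul,
        Matrix.mul_one, Matrix.one_mul]
      congr 1
      rw [← hR, Matrix.mul_assoc]
    have hAT : A * M⁻¹ = M⁻¹ * A := comm_nonsing_inv hdet hAM
    have hBT : B * M⁻¹ = M⁻¹ * B := comm_nonsing_inv hdet hBM
    have hTsymm : (M⁻¹)ᵀ = M⁻¹ := by
      have hMsymm : Mᵀ = M := by
        rw [hM, Matrix.transpose_add, Matrix.transpose_mul, hA, Matrix.transpose_smul,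
          Matrix.transpose_one]
      rw [Matrix.transpose_nonsing_inv, hMsymm]
    have hBA : B * A = -(A * B) := eq_neg_of_add_eq_zero_right hAB
    have X0 : (A * (B * (B * M⁻¹))).trace = 0 := by
      have c1 : A * (B * (B * M⁻¹)) = ((A * B) * M⁻¹) * B := by
        rw [hBT]; simp only [Matrix.mul_assoc]
      have c3 : B * ((A * B) * M⁻¹) = -(A * (B * (B * M⁻¹))) := by
        calc B * ((A * B) * M⁻¹) = (B * A) * (B * M⁻¹) := by
              simp only [Matrix.mul_assoc]
          _ = -((A * B) * (B * M⁻¹)) := by rw [hBA, Matrix.neg_mul]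
          _ = -(A * (B * (B * M⁻¹))) := by simp only [Matrix.mul_assoc]
      have e : (A * (B * (B * M⁻¹))).trace = (B * ((A * B) * M⁻¹)).trace := by
        rw [c1, Matrix.trace_mul_comm]
      rw [c3, Matrix.trace_neg] at e
      linarith
    have X0' : (A * ((A * A) * M⁻¹)).trace = 0 := by
      have e : A * ((A * A) * M⁻¹) = A * (B * (B * M⁻¹)) := by
        rw [← hR, Matrix.mul_assoc]
      rw [e, X0]
    have hTrA : A.trace = ε * (A * M⁻¹).trace := by
      have e1 : A * ((A * A) * M⁻¹) = A - ε • (A * M⁻¹) := by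
        have h2 : (A * A) * M⁻¹ = 1 - ε • M⁻¹ := by
          have e0 : A * A = M - ε • (1 : Matrix (Fin d) (Fin d) ℝ) := by
            rw [hM]; abel
          rw [e0, Matrix.sub_mul, hMT, Matrix.smul_mul, Matrix.one_mul]
        rw [h2, Matrix.mul_sub, Matrix.mul_one, Matrix.mul_smul]
      have e2 := congrArg Matrix.trace e1
      rw [X0', Matrix.trace_sub, Matrix.trace_smul, smul_eq_mul] at e2
      linarith
    have hNsymm : (A * M⁻¹)ᵀ = A * M⁻¹ := by
      rw [Matrix.transpose_mul, hTsymm, hA, ← hAT]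
    have hCS : (A * M⁻¹).trace ^ 2 ≤ (d : ℝ) * ((A * M⁻¹)ᵀ * (A * M⁻¹)).trace := by
      have h1 : (A * M⁻¹).trace ^ 2 ≤ (d : ℝ) * ∑ i, ((A * M⁻¹) i i) ^ 2 := by
        have := sq_sum_le_card_mul_sum_sq (s := (Finset.univ : Finset (Fin d)))
          (f := fun i => (A * M⁻¹) i i)
        simpa [Matrix.trace, Matrix.diag] using this
      have h2 : ∑ i, ((A * M⁻¹) i i) ^ 2 ≤ ((A * M⁻¹)ᵀ * (A * M⁻¹)).trace := by
        rw [trace_tmul_eq_sum]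
        apply Finset.sum_le_sum
        intro i _
        exact Finset.single_le_sum (f := fun j => ((A * M⁻¹) j i) ^ 2)
          (fun j _ => sq_nonneg _) (Finset.mem_univ i)
      nlinarith
    have haT : (A * A) * M⁻¹ = M⁻¹ * (A * A) := by
      calc (A * A) * M⁻¹ = A * (A * M⁻¹) := by rw [Matrix.mul_assoc]
        _ = A * (M⁻¹ * A) := by rw [hAT]
        _ = (A * M⁻¹) * A := by rw [Matrix.mul_assoc]
        _ = (M⁻¹ * A) * A := by rw [hAT]
        _ = M⁻¹ * (A * A) := by rw [Matrix.mul_assoc]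
    have hNN : ((A * M⁻¹)ᵀ * (A * M⁻¹)).trace ≤ (d : ℝ) / (4 * ε) := by
      have hC : (A * A - ε • (1 : Matrix (Fin d) (Fin d) ℝ)) * M⁻¹
          = M⁻¹ * (A * A - ε • (1 : Matrix (Fin d) (Fin d) ℝ)) := by
        rw [Matrix.sub_mul, Matrix.mul_sub, haT, Matrix.smul_mul, Matrix.mul_smul,
          Matrix.one_mul, Matrix.mul_one]
      have hRsymm : ((A * A - ε • (1 : Matrix (Fin d) (Fin d) ℝ)) * M⁻¹)ᵀ
          = (A * A - ε • (1 : Matrix (Fin d) (Fin d) ℝ)) * M⁻¹ := by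
        rw [Matrix.transpose_mul, hTsymm, Matrix.transpose_sub, Matrix.transpose_mul,
          hA, Matrix.transpose_smul, Matrix.transpose_one, ← hC]
      have hNNe : (A * M⁻¹) * (A * M⁻¹) = (A * A) * (M⁻¹ * M⁻¹) := by
        calc A * M⁻¹ * (A * M⁻¹) = A * (M⁻¹ * A) * M⁻¹ := by simp only [Matrix.mul_assoc]
          _ = A * (A * M⁻¹) * M⁻¹ := by rw [← hAT]
          _ = (A * A) * (M⁻¹ * M⁻¹) := by simp only [Matrix.mul_assoc]
      have hRR : ((A * A - ε • (1 : Matrix (Fin d) (Fin d) ℝ)) * M⁻¹)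
            * ((A * A - ε • (1 : Matrix (Fin d) (Fin d) ℝ)) * M⁻¹)
          = ((A * A - ε • (1 : Matrix (Fin d) (Fin d) ℝ))
            * (A * A - ε • (1 : Matrix (Fin d) (Fin d) ℝ))) * (M⁻¹ * M⁻¹) := by
        calc (A * A - ε • (1 : Matrix (Fin d) (Fin d) ℝ)) * M⁻¹
              * ((A * A - ε • (1 : Matrix (Fin d) (Fin d) ℝ)) * M⁻¹)
            = (A * A - ε • (1 : Matrix (Fin d) (Fin d) ℝ))
              * (M⁻¹ * (A * A - ε • (1 : Matrix (Fin d) (Fin d) ℝ))) * M⁻¹ := by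
              simp only [Matrix.mul_assoc]
          _ = (A * A - ε • (1 : Matrix (Fin d) (Fin d) ℝ))
              * ((A * A - ε • (1 : Matrix (Fin d) (Fin d) ℝ)) * M⁻¹) * M⁻¹ := by rw [← hC]
          _ = _ := by simp only [Matrix.mul_assoc]
      have hring : (4 * ε) • (A * A) + (A * A - ε • (1 : Matrix (Fin d) (Fin d) ℝ))
          * (A * A - ε • (1 : Matrix (Fin d) (Fin d) ℝ)) = M * M := by
        rw [hM]
        simp only [Matrix.sub_mul, Matrix.mul_sub, Matrix.add_mul, Matrix.mul_add,
          Matrix.smul_mul, Matrix.mul_smul, Matrix.one_mul, Matrix.mul_one, smul_smul]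
        module
      have hMMTT : (M * M) * (M⁻¹ * M⁻¹) = 1 := by
        calc (M * M) * (M⁻¹ * M⁻¹) = M * ((M * M⁻¹) * M⁻¹) := by simp only [Matrix.mul_assoc]
          _ = M * M⁻¹ := by conv_lhs => rw [hMT, Matrix.one_mul]
          _ = 1 := hMT
      have hidty : (4 * ε) • ((A * M⁻¹) * (A * M⁻¹))
          + ((A * A - ε • (1 : Matrix (Fin d) (Fin d) ℝ)) * M⁻¹)
            * ((A * A - ε • (1 : Matrix (Fin d) (Fin d) ℝ)) * M⁻¹) = 1 := by
        rw [hNNe, hRR]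
        calc (4 * ε) • ((A * A) * (M⁻¹ * M⁻¹))
              + ((A * A - ε • (1 : Matrix (Fin d) (Fin d) ℝ))
                * (A * A - ε • (1 : Matrix (Fin d) (Fin d) ℝ))) * (M⁻¹ * M⁻¹)
            = ((4 * ε) • (A * A) + (A * A - ε • (1 : Matrix (Fin d) (Fin d) ℝ))
                * (A * A - ε • (1 : Matrix (Fin d) (Fin d) ℝ))) * (M⁻¹ * M⁻¹) := by
              rw [Matrix.add_mul, Matrix.smul_mul]
          _ = (M * M) * (M⁻¹ * M⁻¹) := by rw [hring]
          _ = 1 := hMMTT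
      have htr := congrArg Matrix.trace hidty
      rw [Matrix.trace_add, Matrix.trace_smul, smul_eq_mul, Matrix.trace_one] at htr
      simp only [Fintype.card_fin] at htr
      have hpos : 0 ≤ (((A * A - ε • (1 : Matrix (Fin d) (Fin d) ℝ)) * M⁻¹)
          * ((A * A - ε • (1 : Matrix (Fin d) (Fin d) ℝ)) * M⁻¹)).trace := by
        have e : ((A * A - ε • (1 : Matrix (Fin d) (Fin d) ℝ)) * M⁻¹)
            * ((A * A - ε • (1 : Matrix (Fin d) (Fin d) ℝ)) * M⁻¹)
          = ((A * A - ε • (1 : Matrix (Fin d) (Fin d) ℝ)) * M⁻¹)ᵀ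
            * ((A * A - ε • (1 : Matrix (Fin d) (Fin d) ℝ)) * M⁻¹) := by rw [hRsymm]
        rw [e]
        exact trace_tmul_nonneg _
      have hNt : ((A * M⁻¹)ᵀ * (A * M⁻¹)) = (A * M⁻¹) * (A * M⁻¹) := by rw [hNsymm]
      rw [hNt, le_div_iff₀ (by positivity)]
      nlinarith
    have hb : (A * M⁻¹).trace ^ 2 ≤ (d:ℝ) * ((d:ℝ) / (4 * ε)) := by nlinarith
    rw [hTrA, mul_pow]
    calc ε ^ 2 * (A * M⁻¹).trace ^ 2 ≤ ε ^ 2 * ((d:ℝ) * ((d:ℝ) / (4 * ε))) := by nlinarith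
      _ = ε * ((d:ℝ)^2/4) := by field_simp
  by_contra h
  have hx : 0 < A.trace ^ 2 := by positivity
  have hd2 : 0 < (d:ℝ)^2/4 := by positivity
  have hkey := key ((A.trace ^ 2) / ((d:ℝ) ^ 2 / 4) / 2) (by positivity)
  have he : (A.trace ^ 2) / ((d:ℝ) ^ 2 / 4) / 2 * ((d:ℝ) ^ 2 / 4) = A.trace ^ 2 / 2 := by
    field_simp
  rw [he] at hkey
  linarith

end atom3

section step1

lemma anticomm_expand {d : ℕ} (A B : Matrix (Fin d) (Fin d) ℝ) (hA : Aᵀ = A) (hB : Bᵀ = B) :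
    ((A*B + B*A)ᵀ * (A*B + B*A)).trace =
      (wEval A B [0,1,0,1]).trace + (wEval A B [0,1,1,0]).trace
      + (wEval A B [1,0,0,1]).trace + (wEval A B [1,0,1,0]).trace := by
  have hT : (A*B + B*A)ᵀ = A*B + B*A := by
    rw [Matrix.transpose_add, Matrix.transpose_mul, Matrix.transpose_mul, hA, hB, add_comm]
  rw [hT, Matrix.add_mul, Matrix.mul_add, Matrix.mul_add, Matrix.trace_add, Matrix.trace_add,
    Matrix.trace_add]
  simp only [wEval, reduceIte, Matrix.mul_one, Matrix.mul_assoc,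
    show (if (1:Fin 2) = 0 then A else B) = B from if_neg (by decide)]
  ring

lemma sqrel_expand {d : ℕ} (A B : Matrix (Fin d) (Fin d) ℝ) (hA : Aᵀ = A) (hB : Bᵀ = B)
    (c₀ c₁ : ℝ) :
    (((B*B - (c₀ • (1 : Matrix (Fin d) (Fin d) ℝ) + c₁ • (A*A))))ᵀ
      * ((B*B - (c₀ • (1 : Matrix (Fin d) (Fin d) ℝ) + c₁ • (A*A))))).trace
    = (wEval A B [1,1,1,1]).trace - 2*c₀*(wEval A B [1,1]).trace
      - c₁*(wEval A B [1,1,0,0]).trace - c₁*(wEval A B [0,0,1,1]).trace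
      + c₀^2*(wEval A B []).trace + 2*c₀*c₁*(wEval A B [0,0]).trace
      + c₁^2*(wEval A B [0,0,0,0]).trace := by
  have hT : ((B*B - (c₀ • (1 : Matrix (Fin d) (Fin d) ℝ) + c₁ • (A*A))))ᵀ
      = (B*B - (c₀ • (1 : Matrix (Fin d) (Fin d) ℝ) + c₁ • (A*A))) := by
    rw [Matrix.transpose_sub, Matrix.transpose_mul, Matrix.transpose_add, Matrix.transpose_smul,
      Matrix.transpose_smul, Matrix.transpose_mul, Matrix.transpose_one, hA, hB]
  rw [hT]
  simp only [Matrix.sub_mul, Matrix.mul_sub, Matrix.add_mul, Matrix.mul_add,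
    Matrix.smul_mul, Matrix.mul_smul, Matrix.mul_one, Matrix.one_mul, smul_smul,
    Matrix.trace_sub, Matrix.trace_add, Matrix.trace_smul, smul_eq_mul]
  simp only [wEval, reduceIte, Matrix.mul_one, Matrix.mul_assoc,
    show (if (1:Fin 2) = 0 then A else B) = B from if_neg (by decide)]
  ring

end step1

/-- `v` is a cyclic permutation of `w`. -/
def IsCyc (v w : Word) : Prop := ∃ a b : Word, v = a ++ b ∧ w = b ++ a

/-- A truncated tracial sequence of degree `2n`. -/
def IsTracialSeq (n : ℕ) (β : Word → ℝ) : Prop :=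
  (∀ v w : Word, w.length ≤ 2 * n → IsCyc v w → β v = β w) ∧
  ∀ w : Word, w.length ≤ 2 * n → β w = β w.reverse

/-- `β` is noncommutative: two words with the same commutative collapse get
different values. -/
def IsNCSeq (n : ℕ) (β : Word → ℝ) : Prop :=
  ∃ v w : Word, v.length ≤ 2 * n ∧ w.length ≤ 2 * n ∧
    v.count 0 = w.count 0 ∧ v.count 1 = w.count 1 ∧ β v ≠ β w
/-- A finitely atomic tracial representing measure for `β` (degree `2n`). -/
structure RepMeas (n : ℕ) (β : Word → ℝ) where
  k : ℕ
  size : Fin k → ℕ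
  sizePos : ∀ i, 0 < size i
  matA : (i : Fin k) → Matrix (Fin (size i)) (Fin (size i)) ℝ
  matB : (i : Fin k) → Matrix (Fin (size i)) (Fin (size i)) ℝ
  symA : ∀ i, (matA i).IsSymm
  symB : ∀ i, (matB i).IsSymm
  lam : Fin k → ℝ
  lamPos : ∀ i, 0 < lam i
  lamSum : ∑ i, lam i = 1
  rep : ∀ w : Word, w.length ≤ 2 * n → β w = ∑ i, lam i * nTr (wEval (matA i) (matB i) w)

def AdmitsMeasure (n : ℕ) (β : Word → ℝ) : Prop := Nonempty (RepMeas n β)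

/-- An nc measure: a representing measure with at least one atom of size `≥ 2`. -/
def AdmitsNCMeasure (n : ℕ) (β : Word → ℝ) : Prop := ∃ μ : RepMeas n β, ∃ i, 2 ≤ μ.size i

/-- A representing measure of type `(m,1)`: exactly `m` atoms of size 1 and
exactly one atom of size 2 (and no larger atoms). -/
def AdmitsTypeM1 (n : ℕ) (β : Word → ℝ) (m : ℕ) : Prop :=
  ∃ μ : RepMeas n β, (∀ i, μ.size i = 1 ∨ μ.size i = 2) ∧
    (Finset.univ.filter fun i => μ.size i = 1).card = m ∧
    (Finset.univ.filter fun i => μ.size i = 2).card = 1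

/-- Column relation `XY + YX = 0` in `M_n(β)`. -/
def RelXYYX (n : ℕ) (β : Word → ℝ) : Prop :=
  ∀ v : Word, v.length ≤ n → β (v.reverse ++ [0, 1]) + β (v.reverse ++ [1, 0]) = 0

/-- Column relation `Y² = 1 − X²` in `M_n(β)`. -/
def RelA (n : ℕ) (β : Word → ℝ) : Prop :=
  ∀ v : Word, v.length ≤ n → β (v.reverse ++ [1, 1]) = β v.reverse - β (v.reverse ++ [0, 0])

/-- Column relation `Y² = 1` in `M_n(β)`. -/
def RelB (n : ℕ) (β : Word → ℝ) : Prop :=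
  ∀ v : Word, v.length ≤ n → β (v.reverse ++ [1, 1]) = β v.reverse

/-- Column relation `Y² = 1 + X²` in `M_n(β)`. -/
def RelC (n : ℕ) (β : Word → ℝ) : Prop :=
  ∀ v : Word, v.length ≤ n → β (v.reverse ++ [1, 1]) = β v.reverse + β (v.reverse ++ [0, 0])

/-- Column relation `Y² = X²` in `M_n(β)`. -/
def RelD (n : ℕ) (β : Word → ℝ) : Prop :=
  ∀ v : Word, v.length ≤ n → β (v.reverse ++ [1, 1]) = β (v.reverse ++ [0, 0])

section step1b

variable {n : ℕ} {β : Word → ℝ}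

lemma atoms_anticomm (hn : 2 ≤ n) (hrel1 : RelXYYX n β) (μ : RepMeas n β) (i : Fin μ.k) :
    μ.matA i * μ.matB i + μ.matB i * μ.matA i = 0 := by
  have hsum : ∑ j, μ.lam j * nTr ((μ.matA j * μ.matB j + μ.matB j * μ.matA j)ᵀ
      * (μ.matA j * μ.matB j + μ.matB j * μ.matA j)) = 0 := by
    have e : ∑ j, μ.lam j * nTr ((μ.matA j * μ.matB j + μ.matB j * μ.matA j)ᵀ
          * (μ.matA j * μ.matB j + μ.matB j * μ.matA j))
        = β [0,1,0,1] + β [0,1,1,0] + β [1,0,0,1] + β [1,0,1,0] := by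
      rw [μ.rep [0,1,0,1] (by simp; omega), μ.rep [0,1,1,0] (by simp; omega),
        μ.rep [1,0,0,1] (by simp; omega), μ.rep [1,0,1,0] (by simp; omega),
        ← Finset.sum_add_distrib, ← Finset.sum_add_distrib, ← Finset.sum_add_distrib]
      apply Finset.sum_congr rfl
      intro j _
      have hexp := anticomm_expand (μ.matA j) (μ.matB j) (μ.symA j) (μ.symB j)
      simp only [nTr, hexp]
      ring
    rw [e]
    have h1 := hrel1 [1,0] (by simp; omega)
    have h2 := hrel1 [0,1] (by simp; omega)
    simp only [List.reverse_cons, List.reverse_nil, List.nil_append, List.cons_append] at h1 h2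
    linarith
  have hnonneg : ∀ j ∈ (Finset.univ : Finset (Fin μ.k)),
      0 ≤ μ.lam j * nTr ((μ.matA j * μ.matB j + μ.matB j * μ.matA j)ᵀ
        * (μ.matA j * μ.matB j + μ.matB j * μ.matA j)) := by
    intro j _
    apply mul_nonneg (le_of_lt (μ.lamPos j))
    exact div_nonneg (trace_tmul_nonneg _) (by positivity)
  have hz := (Finset.sum_eq_zero_iff_of_nonneg hnonneg).1 hsum i (Finset.mem_univ i)
  have hnTr : nTr ((μ.matA i * μ.matB i + μ.matB i * μ.matA i)ᵀ
      * (μ.matA i * μ.matB i + μ.matB i * μ.matA i)) = 0 := by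
    rcases mul_eq_zero.1 hz with h | h
    · exact absurd h (ne_of_gt (μ.lamPos i))
    · exact h
  have hcard : ((Fintype.card (Fin (μ.size i))) : ℝ) ≠ 0 := by
    simp only [Fintype.card_fin]
    exact_mod_cast (μ.sizePos i).ne'
  have htr := (div_eq_zero_iff.1 hnTr).resolve_right hcard
  exact eq_zero_of_trace_tmul _ htr

lemma atoms_sqrel (hn : 2 ≤ n) (c₀ c₁ : ℝ)
    (hR : ∀ u : Word, u.length ≤ 2 → β (u ++ [1,1]) = c₀ * β u + c₁ * β (u ++ [0,0]))
    (μ : RepMeas n β) (i : Fin μ.k) :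
    μ.matB i * μ.matB i
      = c₀ • (1 : Matrix (Fin (μ.size i)) (Fin (μ.size i)) ℝ) + c₁ • (μ.matA i * μ.matA i) := by
  have hsum : ∑ j, μ.lam j * nTr ((μ.matB j * μ.matB j - (c₀ • 1 + c₁ • (μ.matA j * μ.matA j)))ᵀ
      * (μ.matB j * μ.matB j - (c₀ • 1 + c₁ • (μ.matA j * μ.matA j)))) = 0 := by
    have e : ∑ j, μ.lam j * nTr ((μ.matB j * μ.matB j - (c₀ • 1 + c₁ • (μ.matA j * μ.matA j)))ᵀ
          * (μ.matB j * μ.matB j - (c₀ • 1 + c₁ • (μ.matA j * μ.matA j))))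
        = β [1,1,1,1] - 2*c₀*β [1,1] - c₁*β [1,1,0,0] - c₁*β [0,0,1,1]
          + c₀^2*β [] + 2*c₀*c₁*β [0,0] + c₁^2*β [0,0,0,0] := by
      rw [μ.rep [1,1,1,1] (by simp; omega), μ.rep [1,1] (by simp; omega),
        μ.rep [1,1,0,0] (by simp; omega), μ.rep [0,0,1,1] (by simp; omega),
        μ.rep [] (by simp), μ.rep [0,0] (by simp; omega),
        μ.rep [0,0,0,0] (by simp; omega)]
      simp only [← Finset.mul_sum, ← Finset.sum_sub_distrib, ← Finset.sum_add_distrib,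
        Finset.mul_sum]
      apply Finset.sum_congr rfl
      intro j _
      have hexp := sqrel_expand (μ.matA j) (μ.matB j) (μ.symA j) (μ.symB j) c₀ c₁
      simp only [nTr, hexp]
      ring
    rw [e]
    have h1 := hR [1,1] (by simp)
    have h2 := hR [] (by simp)
    have h3 := hR [0,0] (by simp)
    simp only [List.cons_append, List.nil_append] at h1 h2 h3
    linear_combination h1 - c₀ * h2 - c₁ * h3
  have hnonneg : ∀ j ∈ (Finset.univ : Finset (Fin μ.k)),
      0 ≤ μ.lam j * nTr ((μ.matB j * μ.matB j - (c₀ • 1 + c₁ • (μ.matA j * μ.matA j)))ᵀ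
        * (μ.matB j * μ.matB j - (c₀ • 1 + c₁ • (μ.matA j * μ.matA j)))) := by
    intro j _
    apply mul_nonneg (le_of_lt (μ.lamPos j))
    exact div_nonneg (trace_tmul_nonneg _) (by positivity)
  have hz := (Finset.sum_eq_zero_iff_of_nonneg hnonneg).1 hsum i (Finset.mem_univ i)
  have hnTr : nTr ((μ.matB i * μ.matB i - (c₀ • 1 + c₁ • (μ.matA i * μ.matA i)))ᵀ
      * (μ.matB i * μ.matB i - (c₀ • 1 + c₁ • (μ.matA i * μ.matA i)))) = 0 := by
    rcases mul_eq_zero.1 hz with h | h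
    · exact absurd h (ne_of_gt (μ.lamPos i))
    · exact h
  have hcard : ((Fintype.card (Fin (μ.size i))) : ℝ) ≠ 0 := by
    simp only [Fintype.card_fin]
    exact_mod_cast (μ.sizePos i).ne'
  have htr := (div_eq_zero_iff.1 hnTr).resolve_right hcard
  have := eq_zero_of_trace_tmul _ htr
  rw [sub_eq_zero] at this
  exact this

end step1b

section atom4

variable {d : ℕ} {A B : Matrix (Fin d) (Fin d) ℝ}

lemma relD_trace_odd (hA : Aᵀ = A) (hAB : A * B + B * A = 0) (hR : B * B = A * A)
    {k : ℕ} (hk : Odd k) : (A ^ k).trace = 0 := by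
  obtain ⟨j, rfl⟩ := hk
  cases j with
  | zero => simpa using relD_traceA hA hAB hR
  | succ i =>
    have h0 := trace_powA_mul_B2 hAB (k := 2*i+1) ⟨i, by ring⟩
    rw [hR] at h0
    have hpow : A ^ (2*i+1) * (A * A) = A ^ (2*(i+1)+1) := by
      rw [show 2*(i+1)+1 = (2*i+1)+2 from by ring]
      conv_rhs => rw [pow_add]
      rw [sq]
    rw [hpow] at h0
    convert h0 using 3

lemma isUnit_det_relB (hR : B * B = 1) : IsUnit B.det := by
  apply IsUnit.of_mul_eq_one B.det
  rw [← Matrix.det_mul, hR, Matrix.det_one]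

lemma relBC_trace_odd (hAB : A * B + B * A = 0) (hdet : IsUnit B.det)
    {k : ℕ} (hk : Odd k) : (A ^ k).trace = 0 :=
  trace_pow_odd_of_conj (eq_neg_of_add_eq_zero_right hAB)
    (Matrix.mul_nonsing_inv _ hdet) (Matrix.nonsing_inv_mul _ hdet) hk

end atom4

section gen

variable {n : ℕ} {β : Word → ℝ}

lemma relA_gen (h : RelA n β) (hn : 2 ≤ n) :
    ∀ u : Word, u.length ≤ 2 → β (u ++ [1,1]) = 1 * β u + (-1) * β (u ++ [0,0]) := by
  intro u hu
  have h2 := h u.reverse (by simpa using le_trans hu hn)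
  rw [List.reverse_reverse] at h2
  linarith

lemma relB_gen (h : RelB n β) (hn : 2 ≤ n) :
    ∀ u : Word, u.length ≤ 2 → β (u ++ [1,1]) = 1 * β u + 0 * β (u ++ [0,0]) := by
  intro u hu
  have h2 := h u.reverse (by simpa using le_trans hu hn)
  rw [List.reverse_reverse] at h2
  linarith

lemma relC_gen (h : RelC n β) (hn : 2 ≤ n) :
    ∀ u : Word, u.length ≤ 2 → β (u ++ [1,1]) = 1 * β u + 1 * β (u ++ [0,0]) := by
  intro u hu
  have h2 := h u.reverse (by simpa using le_trans hu hn)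
  rw [List.reverse_reverse] at h2
  linarith

lemma relD_gen (h : RelD n β) (hn : 2 ≤ n) :
    ∀ u : Word, u.length ≤ 2 → β (u ++ [1,1]) = 0 * β u + 1 * β (u ++ [0,0]) := by
  intro u hu
  have h2 := h u.reverse (by simpa using le_trans hu hn)
  rw [List.reverse_reverse] at h2
  linarith

end gen

theorem stmt17 (n : ℕ) (hn : 2 ≤ n) (β : Word → ℝ) (hβ : IsTracialSeq n β)
    (hnc : IsNCSeq n β) (hrel1 : RelXYYX n β)
    (hrel2 : RelA n β ∨ RelB n β ∨ RelC n β ∨ RelD n β)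
    (hmeas : AdmitsNCMeasure n β) :
    (∀ i : ℕ, 2 * i + 1 ≤ 2 * n → β (List.replicate (2 * i + 1) 0) = β [0]) ∧
    (∀ j : ℕ, 1 ≤ j → j + 1 ≤ 2 * n → β (List.replicate j 0 ++ [1]) = 0) ∧
    (∀ k : ℕ, Odd k → k + 2 ≤ 2 * n → β (List.replicate k 0 ++ [1, 1]) = 0) ∧
    (RelA n β → ∀ k : ℕ, k + 2 ≤ 2 * n →
      β (List.replicate k 0 ++ [1, 1]) =
        β (List.replicate k 0) - β (List.replicate (k + 2) 0)) ∧
    ((RelB n β ∨ RelC n β) → β [0] = 0) ∧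
    (RelB n β → ∀ k : ℕ, k + 2 ≤ 2 * n →
      β (List.replicate k 0 ++ [1, 1]) = β (List.replicate k 0)) ∧
    (RelC n β → ∀ k : ℕ, k + 2 ≤ 2 * n →
      β (List.replicate k 0 ++ [1, 1]) =
        β (List.replicate k 0) + β (List.replicate (k + 2) 0)) ∧
    (RelD n β → ∀ k : ℕ, k + 2 ≤ 2 * n →
      β (List.replicate k 0 ++ [1, 1]) = β (List.replicate (k + 2) 0)) := by
  obtain ⟨μ, -⟩ := hmeas
  have hAC : ∀ j, μ.matA j * μ.matB j + μ.matB j * μ.matA j = 0 :=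
    atoms_anticomm hn hrel1 μ
  have hev1 : ∀ (j : Fin μ.k) (k : ℕ),
      wEval (μ.matA j) (μ.matB j) (List.replicate k 0) = (μ.matA j) ^ k :=
    fun j k => wEval_rep _ _ k
  have hevY : ∀ (j : Fin μ.k),
      wEval (μ.matA j) (μ.matB j) [1] = μ.matB j := by
    intro j
    simp only [wEval, show (if (1:Fin 2) = 0 then μ.matA j else μ.matB j) = μ.matB j
      from if_neg (by decide), Matrix.mul_one]
  have hevYY : ∀ (j : Fin μ.k),
      wEval (μ.matA j) (μ.matB j) [1,1] = μ.matB j * μ.matB j := by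
    intro j
    simp only [wEval, show (if (1:Fin 2) = 0 then μ.matA j else μ.matB j) = μ.matB j
      from if_neg (by decide), Matrix.mul_one]
  have hev2 : ∀ (j : Fin μ.k) (k : ℕ),
      wEval (μ.matA j) (μ.matB j) (List.replicate k 0 ++ [1])
        = (μ.matA j) ^ k * μ.matB j := by
    intro j k
    rw [wEval_append, hev1, hevY]
  have hev3 : ∀ (j : Fin μ.k) (k : ℕ),
      wEval (μ.matA j) (μ.matB j) (List.replicate k 0 ++ [1,1])
        = (μ.matA j) ^ k * (μ.matB j * μ.matB j) := by
    intro j k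
    rw [wEval_append, hev1, hevYY]
  -- per-atom squared relations in the four cases
  -- conclusion (1)
  have hβ0 : β [0] = ∑ j, μ.lam j * nTr ((μ.matA j) ^ 1) := by
    rw [μ.rep [0] (by simp; omega)]
    apply Finset.sum_congr rfl
    intro j _
    rw [show ([0] : Word) = List.replicate 1 0 from rfl, hev1]
  have key1 : ∀ (hkey : ∀ (j : Fin μ.k) (i : ℕ),
      ((μ.matA j) ^ (2 * i + 1)).trace = (μ.matA j).trace),
      ∀ i : ℕ, 2 * i + 1 ≤ 2 * n → β (List.replicate (2 * i + 1) 0) = β [0] := by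
    intro hkey i hi
    rw [μ.rep _ (by simp; omega), hβ0]
    apply Finset.sum_congr rfl
    intro j _
    rw [hev1]
    simp only [nTr]
    rw [hkey j i, pow_one]
  refine ⟨?_, ?_, ?_, ?_, ?_, ?_, ?_, ?_⟩
  · -- (1)
    rcases hrel2 with hA' | hB' | hC' | hD'
    · have hsq := atoms_sqrel hn 1 (-1) (relA_gen hA' hn) μ
      have hsq' : ∀ j, μ.matB j * μ.matB j = 1 - μ.matA j * μ.matA j := by
        intro j
        have := hsq j
        rwa [one_smul, neg_one_smul, ← sub_eq_add_neg] at this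
      exact key1 fun j i => relA_trace (hAC j) (hsq' j) i
    · have hsq := atoms_sqrel hn 1 0 (relB_gen hB' hn) μ
      have hsq' : ∀ j, μ.matB j * μ.matB j = 1 := by
        intro j
        have := hsq j
        rwa [one_smul, zero_smul, add_zero] at this
      refine key1 fun j i => ?_
      rw [relBC_trace_odd (hAC j) (isUnit_det_relB (hsq' j)) ⟨i, rfl⟩,
        show (μ.matA j).trace = ((μ.matA j) ^ 1).trace from by rw [pow_one],
        relBC_trace_odd (hAC j) (isUnit_det_relB (hsq' j)) (k := 1) ⟨0, rfl⟩]
    · have hsq := atoms_sqrel hn 1 1 (relC_gen hC' hn) μ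
      have hsq' : ∀ j, μ.matB j * μ.matB j = 1 + μ.matA j * μ.matA j := by
        intro j
        have := hsq j
        rwa [one_smul, one_smul] at this
      refine key1 fun j i => ?_
      rw [relBC_trace_odd (hAC j) (isUnit_det_relC (μ.symA j) (hsq' j)) ⟨i, rfl⟩,
        show (μ.matA j).trace = ((μ.matA j) ^ 1).trace from by rw [pow_one],
        relBC_trace_odd (hAC j) (isUnit_det_relC (μ.symA j) (hsq' j)) (k := 1) ⟨0, rfl⟩]
    · have hsq := atoms_sqrel hn 0 1 (relD_gen hD' hn) μ
      have hsq' : ∀ j, μ.matB j * μ.matB j = μ.matA j * μ.matA j := by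
        intro j
        have := hsq j
        rwa [one_smul, zero_smul, zero_add] at this
      refine key1 fun j i => ?_
      rw [relD_trace_odd (μ.symA j) (hAC j) (hsq' j) ⟨i, rfl⟩,
        show (μ.matA j).trace = ((μ.matA j) ^ 1).trace from by rw [pow_one],
        relD_trace_odd (μ.symA j) (hAC j) (hsq' j) (k := 1) ⟨0, rfl⟩]
  · -- (2)
    intro j hj hj2
    rw [μ.rep _ (by simp; omega)]
    apply Finset.sum_eq_zero
    intro i _
    rw [hev2]
    simp only [nTr]
    rw [trace_powA_mul_B (hAC i) j (by omega)]
    simp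
  · -- (3)
    intro k hk hk2
    rw [μ.rep _ (by simp; omega)]
    apply Finset.sum_eq_zero
    intro i _
    rw [hev3]
    simp only [nTr]
    rw [trace_powA_mul_B2 (hAC i) hk]
    simp
  · -- (4A)
    intro hA' k hk
    have hsq := atoms_sqrel hn 1 (-1) (relA_gen hA' hn) μ
    rw [μ.rep _ (by simp; omega), μ.rep (List.replicate k 0) (by simp; omega),
      μ.rep (List.replicate (k+2) 0) (by simp; omega), ← Finset.sum_sub_distrib]
    apply Finset.sum_congr rfl
    intro j _
    have ht := trace_relation 1 (-1) (hsq j) k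
    rw [hev3, hev1, hev1]
    simp only [nTr]
    rw [ht]
    ring
  · -- (5) RelB ∨ RelC → β [0] = 0
    intro h'
    have hdet : ∀ j, IsUnit (μ.matB j).det := by
      rcases h' with hB' | hC'
      · have hsq := atoms_sqrel hn 1 0 (relB_gen hB' hn) μ
        intro j
        have := hsq j
        rw [one_smul, zero_smul, add_zero] at this
        exact isUnit_det_relB this
      · have hsq := atoms_sqrel hn 1 1 (relC_gen hC' hn) μ
        intro j
        have := hsq j
        rw [one_smul, one_smul] at this
        exact isUnit_det_relC (μ.symA j) this
    rw [hβ0]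
    apply Finset.sum_eq_zero
    intro j _
    simp only [nTr]
    rw [relBC_trace_odd (hAC j) (hdet j) (k := 1) ⟨0, rfl⟩]
    simp
  · -- (4B)
    intro hB' k hk
    have hsq := atoms_sqrel hn 1 0 (relB_gen hB' hn) μ
    rw [μ.rep _ (by simp; omega), μ.rep (List.replicate k 0) (by simp; omega)]
    apply Finset.sum_congr rfl
    intro j _
    have ht := trace_relation 1 0 (hsq j) k
    rw [hev3, hev1]
    simp only [nTr]
    rw [ht]
    ring
  · -- (4C)
    intro hC' k hk
    have hsq := atoms_sqrel hn 1 1 (relC_gen hC' hn) μ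
    rw [μ.rep _ (by simp; omega), μ.rep (List.replicate k 0) (by simp; omega),
      μ.rep (List.replicate (k+2) 0) (by simp; omega), ← Finset.sum_add_distrib]
    apply Finset.sum_congr rfl
    intro j _
    have ht := trace_relation 1 1 (hsq j) k
    rw [hev3, hev1, hev1]
    simp only [nTr]
    rw [ht]
    ring
  · -- (4D)
    intro hD' k hk
    have hsq := atoms_sqrel hn 0 1 (relD_gen hD' hn) μ
    rw [μ.rep _ (by simp; omega), μ.rep (List.replicate (k+2) 0) (by simp; omega)]
    apply Finset.sum_congr rfl
    intro j _
    have ht := trace_relation 0 1 (hsq j) k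
    rw [hev3, hev1]
    simp only [nTr]
    rw [ht]
    ring
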